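/- Let p be a prime element of ℤ[ω] that does not divide 14, and suppose there is no t ∈ ℤ[ω] with p dividing t³ − 28 (i.e., 28 is not a cube modulo p). Then for all integers x and y, if p divides 7x³ + 2y³ in ℤ[ω], then p divides x and p divides y in ℤ[ω]. -/

import Mathlib

open Polynomial

/-- The ring of Eisenstein integers ℤ[ω] = ℤ[X]/(X² + X + 1). -/
abbrev Eisenstein : Type := AdjoinRoot (X ^ 2 + X + 1 : ℤ[X])

/-- ω, a primitive cube root of unity, satisfying ω² + ω + 1 = 0. -/
noncomputable def ω : Eisenstein := AdjoinRoot.root _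

lemma omega_rel : ω ^ 2 + ω + 1 = 0 := by
  have h := AdjoinRoot.mk_self (f := (X ^ 2 + X + 1 : ℤ[X]))
  simpa [ω, map_add, map_pow, AdjoinRoot.mk_X] using h

lemma monic_f : (X ^ 2 + X + 1 : ℤ[X]).Monic := by
  monicity!

lemma exists_rep (z : Eisenstein) : ∃ a b : ℤ, z = (a : Eisenstein) + b * ω := by
  obtain ⟨g, rfl⟩ := AdjoinRoot.mk_surjective z
  set f : ℤ[X] := X ^ 2 + X + 1 with hf
  have hmod : AdjoinRoot.mk f g = AdjoinRoot.mk f (g %ₘ f) := by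
    conv_lhs => rw [← Polynomial.modByMonic_add_div g f]
    rw [map_add, map_mul, AdjoinRoot.mk_self, zero_mul, add_zero]
  have hdeg : (g %ₘ f).degree ≤ 1 := by
    have h2 : f.degree = 2 := by
      rw [hf]; compute_degree!
    have := Polynomial.degree_modByMonic_lt g monic_f
    rw [h2] at this
    generalize hdd : (g %ₘ f).degree = d at this ⊢
    cases d with
    | bot => exact bot_le
    | coe d =>
      have h2' : (2 : WithBot ℕ) = ((2 : ℕ) : WithBot ℕ) := rfl
      rw [h2'] at this
      have h' : d < 2 := WithBot.coe_lt_coe.mp this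
      have h'' : d ≤ 1 := Nat.lt_succ_iff.mp h'
      show ((d : ℕ) : WithBot ℕ) ≤ ((1 : ℕ) : WithBot ℕ)
      exact WithBot.coe_le_coe.mpr h''
  refine ⟨(g %ₘ f).coeff 0, (g %ₘ f).coeff 1, ?_⟩
  rw [hmod]
  conv_lhs => rw [Polynomial.eq_X_add_C_of_degree_le_one hdeg]
  simp [map_add, map_mul, AdjoinRoot.mk_X, AdjoinRoot.mk_C, ω]
  ring

/-- Every nonzero Eisenstein prime divides some rational prime. -/
lemma exists_rat_prime (p : Eisenstein) (hp : Prime p) :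
    ∃ q : ℕ, q.Prime ∧ p ∣ (q : Eisenstein) := by
  obtain ⟨a, b, hab⟩ := exists_rep p
  set n : ℤ := a ^ 2 - a * b + b ^ 2 with hn
  have hdvd : p ∣ (n : Eisenstein) := by
    refine ⟨(a : Eisenstein) - b - b * ω, ?_⟩
    rw [hab, hn]
    push_cast
    linear_combination ((b:Eisenstein))^2 * omega_rel
  have hn0 : n ≠ 0 := by
    intro h
    have ha : a = 0 ∧ b = 0 := by constructor <;> nlinarith [sq_nonneg (a - b), sq_nonneg (a + b), sq_nonneg a, sq_nonneg b]
    apply hp.ne_zero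
    rw [hab, ha.1, ha.2]
    push_cast
    ring
  have hdvd' : p ∣ ((n.natAbs : ℕ) : Eisenstein) := by
    rcases Int.natAbs_eq n with h | h
    · rw [h, Int.cast_natCast] at hdvd; exact hdvd
    · rw [h, Int.cast_neg, Int.cast_natCast] at hdvd; exact dvd_neg.mp hdvd
  have hm0 : n.natAbs ≠ 0 := Int.natAbs_ne_zero.mpr hn0
  have hprod : (n.natAbs.primeFactorsList.map (Nat.cast : ℕ → Eisenstein)).prod
      = ((n.natAbs : ℕ) : Eisenstein) := by
    rw [← Nat.cast_list_prod, Nat.prod_primeFactorsList hm0]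
  rw [← hprod] at hdvd'
  obtain ⟨c, hc, hpc⟩ := (hp.dvd_prod_iff).mp hdvd'
  obtain ⟨q, hq, rfl⟩ := List.mem_map.mp hc
  exact ⟨q, Nat.prime_of_mem_primeFactorsList hq, hpc⟩

theorem prime_divides_x_and_y (p : Eisenstein) (hp : Prime p)
    (h14 : ¬ p ∣ 14) (h28 : ¬ ∃ t : Eisenstein, p ∣ t ^ 3 - 28) :
    ∀ x y : ℤ, p ∣ (7 * (x : Eisenstein) ^ 3 + 2 * (y : Eisenstein) ^ 3) →
      p ∣ (x : Eisenstein) ∧ p ∣ (y : Eisenstein) := by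
  intro x y hdvd
  obtain ⟨q, hq, hpq⟩ := exists_rat_prime p hp
  have px : p ∣ (x : Eisenstein) := by
    by_contra hpx
    -- q does not divide x
    have hqx : ¬ (q : ℤ) ∣ x := by
      intro ⟨c, hc⟩
      apply hpx
      rw [hc]
      push_cast
      exact Dvd.dvd.mul_right hpq _
    have hcop : IsCoprime (q : ℤ) x := by
      rw [Int.isCoprime_iff_gcd_eq_one]
      have : ¬ q ∣ x.natAbs := by
        intro h
        exact hqx (Int.dvd_natAbs.mp (Int.natCast_dvd_natCast.mpr h))
      have := (Nat.Prime.coprime_iff_not_dvd hq).mpr this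
      simpa [Int.gcd] using this
    obtain ⟨A, B, hAB⟩ := hcop
    -- key integer identity
    have key : (-2 * y * B) ^ 3 - 28 =
        -4 * B ^ 3 * (7 * x ^ 3 + 2 * y ^ 3)
          + 28 * (q : ℤ) * (-3 * A + 3 * A ^ 2 * q - A ^ 3 * q ^ 2) := by
      linear_combination (28 * ((B * x) ^ 2 + (B * x) * (1 - A * q) + (1 - A * q) ^ 2)) * hAB
    apply h28
    refine ⟨((-2 * y * B : ℤ) : Eisenstein), ?_⟩
    have keyE : ((-2 * y * B : ℤ) : Eisenstein) ^ 3 - 28 =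
        (-4 * (B : Eisenstein) ^ 3) * (7 * (x : Eisenstein) ^ 3 + 2 * (y : Eisenstein) ^ 3)
          + ((q : Eisenstein) * (28 * (-3 * A + 3 * (A : Eisenstein) ^ 2 * q - A ^ 3 * q ^ 2))) := by
      have := congrArg (fun n : ℤ => (n : Eisenstein)) key
      push_cast at this ⊢
      linear_combination this
    rw [keyE]
    exact dvd_add (hdvd.mul_left _) (Dvd.dvd.mul_right hpq _)
  refine ⟨px, ?_⟩
  have h2y : p ∣ 2 * (y : Eisenstein) ^ 3 := by
    have h7 : p ∣ 7 * (x : Eisenstein) ^ 3 := (px.pow (by norm_num)).mul_left 7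
    have := dvd_sub hdvd h7
    simpa using this
  have hp2 : ¬ p ∣ (2 : Eisenstein) := by
    intro h
    exact h14 (h.trans (⟨7, by norm_num⟩ : (2 : Eisenstein) ∣ 14))
  rcases hp.2.2 _ _ h2y with h | h
  · exact absurd h hp2
  · exact hp.dvd_of_dvd_pow h
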